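/- arXiv:2205.13875 — 6 statements merged into one kernel-verified Lean document; each statement's English description precedes it below -/
import Mathlib

section
/- Let 0 ≤ α < β, T > 0 and j a natural number. Define G(s) := (β−α)²·e^{(β−α)T} / (β(1−s)e^{(β−α)T} + βs − α)² for s ∈ [0,1], and A := (β·e^{(β−α)T} − α) / ((β−α)·e^{βT}). Then (e^{−(α+β)T}/j!) · ∫₀¹ ( (α+β)T + log G(s) )^j ds = 2^j · e^{−αT} · (β−α)/(β(e^{(β−α)T} − 1)) · Σ_{i=0}^{j} (1/i!) · ( A·(−log A)^i − e^{−βT}·(βT)^i ). -/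
open Real MeasureTheory intervalIntegral

lemma bd_tele (j : ℕ) (K y : ℝ) :
    ∑ i ∈ Finset.range (j+1),
      ((j.factorial : ℝ)/(i.factorial : ℝ)) * (-K * y^i + K * ((i:ℝ) * y^(i-1)))
    = -K * y^j := by
  simp only [mul_add]
  rw [Finset.sum_add_distrib]
  have h2 : ∑ i ∈ Finset.range (j+1),
      ((j.factorial : ℝ)/(i.factorial : ℝ)) * (K * ((i:ℝ) * y^(i-1)))
      = ∑ i ∈ Finset.range j, ((j.factorial : ℝ)/(i.factorial : ℝ)) * (K * y^i) := by
    rw [Finset.sum_range_succ']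
    simp only [Nat.cast_zero, zero_mul, mul_zero, add_zero, Nat.add_sub_cancel]
    refine Finset.sum_congr rfl fun i _ => ?_
    have hfac : ((i+1).factorial : ℝ) = ((i:ℝ)+1) * (i.factorial:ℝ) := by
      rw [Nat.factorial_succ]; push_cast; ring
    rw [hfac]
    have h1 : (i.factorial : ℝ) ≠ 0 := by positivity
    have h3 : ((i:ℝ)+1) ≠ 0 := by positivity
    field_simp
    push_cast; ring
  rw [h2, Finset.sum_range_succ, div_self (by positivity : (j.factorial:ℝ) ≠ 0)]
  rw [add_right_comm, ← Finset.sum_add_distrib]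
  rw [Finset.sum_eq_zero (fun i _ => by ring)]
  ring

/-- Section 3.3: explicit evaluation of
`(e^{-(α+β)T}/j!) ∫₀¹ ((α+β)T + log ∂_sF_T(s))^j ds` for the birth-death process. -/
theorem birth_death_event_count_integral
    (α β T : ℝ) (hα : 0 ≤ α) (hαβ : α < β) (hT : 0 < T) (j : ℕ) :
    (Real.exp (-((α + β) * T)) / (Nat.factorial j : ℝ)) *
        ∫ s in (0 : ℝ)..1,
          ((α + β) * T +
            Real.log ((β - α) ^ 2 * Real.exp ((β - α) * T) /
              (β * (1 - s) * Real.exp ((β - α) * T) + β * s - α) ^ 2)) ^ j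
      = 2 ^ j * Real.exp (-(α * T)) *
          ((β - α) / (β * (Real.exp ((β - α) * T) - 1))) *
          ∑ i ∈ Finset.range (j + 1),
            (1 / (Nat.factorial i : ℝ)) *
              (((β * Real.exp ((β - α) * T) - α) / ((β - α) * Real.exp (β * T))) *
                  (-Real.log ((β * Real.exp ((β - α) * T) - α) /
                      ((β - α) * Real.exp (β * T)))) ^ i -
                Real.exp (-(β * T)) * (β * T) ^ i) := by
  have hba : 0 < β - α := sub_pos.2 hαβ
  have hβ : 0 < β := lt_of_le_of_lt hα hαβ
  set E := Real.exp ((β - α) * T) with hE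
  have hE1 : 1 < E := by
    have := Real.add_one_le_exp ((β - α) * T)
    nlinarith [mul_pos hba hT]
  have hexp : (0:ℝ) < Real.exp (β * T) := Real.exp_pos _
  have hden : (β - α) * Real.exp (β * T) ≠ 0 := by positivity
  set A := (β * E - α) / ((β - α) * Real.exp (β * T)) with hA
  set K := β * (E - 1) / ((β - α) * Real.exp (β * T)) with hK
  have hE1' : (0:ℝ) < E - 1 := by linarith
  have hKpos : 0 < K := by
    rw [hK]; positivity
  have hAK1 : A - K = Real.exp (-(β * T)) := by
    rw [hA, hK, Real.exp_neg, div_sub_div_same]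
    rw [show β * E - α - β * (E - 1) = β - α by ring]
    rw [div_mul_eq_div_div, div_self (ne_of_gt hba), one_div]
  have hexpneg : (0:ℝ) < Real.exp (-(β * T)) := Real.exp_pos _
  -- positivity of A - K*s on [0,1]
  have hpos : ∀ s ∈ Set.uIcc (0:ℝ) 1, 0 < A - K * s := by
    intro s hs
    rw [Set.uIcc_of_le zero_le_one] at hs
    have h1 : K * s ≤ K := by nlinarith [hs.1, hs.2]
    nlinarith
  -- relation between A - K*s and D s
  have hD : ∀ s : ℝ, A - K * s
      = (β * (1 - s) * E + β * s - α) / ((β - α) * Real.exp (β * T)) := by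
    intro s
    rw [hA, hK]
    field_simp
    ring
  have hDpos : ∀ s ∈ Set.uIcc (0:ℝ) 1, 0 < β * (1 - s) * E + β * s - α := by
    intro s hs
    have := hpos s hs
    rw [hD s] at this
    have hdpos : 0 < (β - α) * Real.exp (β * T) := by positivity
    exact (div_pos_iff.mp this).resolve_right (fun h => absurd h.2 (not_lt.2 hdpos.le)) |>.1
  -- Step 1: rewrite integrand
  have hcong : ∫ s in (0:ℝ)..1,
        ((α + β) * T + Real.log ((β - α) ^ 2 * E /
          (β * (1 - s) * E + β * s - α) ^ 2)) ^ j
      = ∫ s in (0:ℝ)..1, 2 ^ j * (-Real.log (A - K * s)) ^ j := by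
    refine intervalIntegral.integral_congr fun s hs => ?_
    have hDp := hDpos s hs
    have hlogAK : Real.log (A - K * s)
        = Real.log (β * (1 - s) * E + β * s - α) - (Real.log (β - α) + β * T) := by
      rw [hD s, Real.log_div (ne_of_gt hDp) hden, Real.log_mul (ne_of_gt hba) (ne_of_gt hexp),
        Real.log_exp]
    have hlogG : Real.log ((β - α) ^ 2 * E / (β * (1 - s) * E + β * s - α) ^ 2)
        = 2 * Real.log (β - α) + (β - α) * T - 2 * Real.log (β * (1 - s) * E + β * s - α) := by
      rw [Real.log_div (by positivity) (by positivity), Real.log_mul (by positivity) (by positivity),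
        Real.log_pow, Real.log_pow, hE, Real.log_exp]
      push_cast; ring
    have : (α + β) * T + Real.log ((β - α) ^ 2 * E / (β * (1 - s) * E + β * s - α) ^ 2)
        = 2 * (-Real.log (A - K * s)) := by
      rw [hlogG, hlogAK]; ring
    simp only [this, mul_pow]
  rw [hcong, intervalIntegral.integral_const_mul]
  -- Step 2: FTC
  set Φ : ℝ → ℝ := fun s => ∑ i ∈ Finset.range (j+1),
      ((j.factorial : ℝ)/(i.factorial : ℝ)) * ((A - K * s) * (-Real.log (A - K * s)) ^ i) with hΦ
  have hderiv : ∀ s ∈ Set.uIcc (0:ℝ) 1,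
      HasDerivAt Φ (-K * (-Real.log (A - K * s)) ^ j) s := by
    intro s hs
    have hx : 0 < A - K * s := hpos s hs
    have hxne : A - K * s ≠ 0 := ne_of_gt hx
    have hw : HasDerivAt (fun s : ℝ => A - K * s) (-K) s := by
      simpa using ((hasDerivAt_id s).const_mul K).const_sub A
    have hlog : HasDerivAt (fun s : ℝ => -Real.log (A - K * s)) (-(-K / (A - K * s))) s :=
      (hw.log hxne).neg
    have hterm : ∀ i : ℕ, HasDerivAt
        (fun s : ℝ => ((j.factorial : ℝ)/(i.factorial : ℝ)) *
          ((A - K * s) * (-Real.log (A - K * s)) ^ i))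
        (((j.factorial : ℝ)/(i.factorial : ℝ)) *
          (-K * (-Real.log (A - K * s)) ^ i + K * ((i:ℝ) * (-Real.log (A - K * s)) ^ (i-1)))) s := by
      intro i
      have hpow : HasDerivAt (fun s : ℝ => (-Real.log (A - K * s)) ^ i)
          ((i:ℝ) * (-Real.log (A - K * s)) ^ (i-1) * (-(-K / (A - K * s)))) s := hlog.pow i
      have h0 := (hw.mul hpow).const_mul ((j.factorial : ℝ)/(i.factorial : ℝ))
      have h5 : (A - K * s) * ((i:ℝ) * (-Real.log (A - K * s)) ^ (i-1) * -(-K / (A - K * s)))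
          = K * ((i:ℝ) * (-Real.log (A - K * s)) ^ (i-1)) := by
        field_simp
      rw [h5] at h0
      exact h0
    have hsum : HasDerivAt Φ
        (∑ i ∈ Finset.range (j+1), ((j.factorial : ℝ)/(i.factorial : ℝ)) *
          (-K * (-Real.log (A - K * s)) ^ i + K * ((i:ℝ) * (-Real.log (A - K * s)) ^ (i-1)))) s :=
      HasDerivAt.fun_sum (fun i _ => hterm i)
    rw [bd_tele j K (-Real.log (A - K * s))] at hsum
    exact hsum
  have hcontD : ContinuousOn (fun s : ℝ => -K * (-Real.log (A - K * s)) ^ j)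
      (Set.uIcc (0:ℝ) 1) := by
    apply ContinuousOn.mul continuousOn_const
    apply ContinuousOn.pow
    apply ContinuousOn.neg
    apply ContinuousOn.log
    · exact (continuousOn_const.sub (continuousOn_const.mul continuousOn_id))
    · intro s hs; exact ne_of_gt (hpos s hs)
  have hFTC := intervalIntegral.integral_eq_sub_of_hasDerivAt hderiv
      (hcontD.intervalIntegrable)
  have hint : ∫ s in (0:ℝ)..1, (-Real.log (A - K * s)) ^ j = (Φ 0 - Φ 1) / K := by
    have h := hFTC
    rw [intervalIntegral.integral_const_mul] at h
    field_simp at h ⊢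
    linarith
  rw [hint]
  -- Step 3: evaluate Φ 0, Φ 1 and conclude
  have hΦ0 : Φ 0 = ∑ i ∈ Finset.range (j+1),
      ((j.factorial : ℝ)/(i.factorial : ℝ)) * (A * (-Real.log A) ^ i) := by
    simp [hΦ]
  have hΦ1 : Φ 1 = ∑ i ∈ Finset.range (j+1),
      ((j.factorial : ℝ)/(i.factorial : ℝ)) * (Real.exp (-(β * T)) * (β * T) ^ i) := by
    rw [hΦ]
    refine Finset.sum_congr rfl fun i _ => ?_
    rw [mul_one, hAK1, Real.log_exp]
    ring_nf
  rw [hΦ0, hΦ1, ← Finset.sum_sub_distrib]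
  simp only [Finset.sum_div, Finset.mul_sum]
  refine Finset.sum_congr rfl fun i _ => ?_
  have hjfac : (j.factorial : ℝ) ≠ 0 := by positivity
  have hifac : (i.factorial : ℝ) ≠ 0 := by positivity
  have hKne : K ≠ 0 := ne_of_gt hKpos
  have hexpprod : Real.exp (-((α + β) * T)) * Real.exp (β * T) = Real.exp (-(α * T)) := by
    rw [← Real.exp_add]; ring_nf
  have hc : Real.exp (-((α + β) * T)) / K = Real.exp (-(α * T)) * ((β - α) / (β * (E - 1))) := by
    rw [hK, div_div_eq_mul_div, ← hexpprod]
    field_simp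
  obtain ⟨a, ha⟩ : ∃ a, a = A * (-Real.log A) ^ i := ⟨_, rfl⟩
  obtain ⟨b, hb⟩ : ∃ b, b = Real.exp (-(β * T)) * (β * T) ^ i := ⟨_, rfl⟩
  rw [← ha, ← hb]
  have hstep : Real.exp (-((α + β) * T)) / (j.factorial:ℝ) *
      (2 ^ j * (((j.factorial:ℝ)/(i.factorial:ℝ) * a - (j.factorial:ℝ)/(i.factorial:ℝ) * b) / K))
      = Real.exp (-((α + β) * T)) / K * (2 ^ j * (1/(i.factorial:ℝ) * (a - b))) := by
    field_simp
  rw [hstep, hc]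
  ring
end

section
/- Let β > 0, T > 0 and j a natural number. Then (e^{−βT}/j!) · ∫₀¹ ( βT + log( e^{βT} / ((1−s)e^{βT} + s)² ) )^j ds = (2^j / (e^{βT} − 1)) · ( 1 − e^{−βT} · Σ_{i=0}^{j} (βT)^i / i! ). -/
open Real MeasureTheory intervalIntegral

private lemma yule_sum_hasDerivAt (j : ℕ) (c : ℝ) :
    HasDerivAt (fun x : ℝ => ∑ i ∈ Finset.range (j+1), x ^ i / (Nat.factorial i : ℝ))
      (∑ i ∈ Finset.range j, c ^ i / (Nat.factorial i : ℝ)) c := by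
  have h : HasDerivAt (fun x : ℝ => ∑ i ∈ Finset.range (j+1), x ^ i / (Nat.factorial i : ℝ))
      (∑ i ∈ Finset.range (j+1), (i : ℝ) * c ^ (i-1) / (Nat.factorial i : ℝ)) c := by
    apply HasDerivAt.fun_sum
    intro i _
    simpa [div_eq_mul_inv] using (hasDerivAt_pow i c).mul_const ((Nat.factorial i : ℝ)⁻¹)
  convert h using 1
  rw [Finset.sum_range_succ']
  simp only [Nat.cast_zero, zero_mul, Nat.factorial_zero, Nat.cast_one, zero_div, add_zero]
  apply Finset.sum_congr rfl
  intro i _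
  have hfac : ((i+1).factorial : ℝ) = (i+1) * (i.factorial : ℝ) := by
    push_cast [Nat.factorial_succ]; ring
  have h1 : (i.factorial : ℝ) ≠ 0 := Nat.cast_ne_zero.mpr (Nat.factorial_ne_zero i)
  simp only [Nat.add_sub_cancel, hfac]
  push_cast
  field_simp

/-- Equation (Yule): the distribution of the number of ancestral reproduction events
for a Yule process with birth rate `β` sampled at time `T`. -/
theorem yule_event_count_integral
    (β T : ℝ) (hβ : 0 < β) (hT : 0 < T) (j : ℕ) :
    (Real.exp (-(β * T)) / (Nat.factorial j : ℝ)) *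
        ∫ s in (0 : ℝ)..1,
          (β * T + Real.log (Real.exp (β * T) /
            ((1 - s) * Real.exp (β * T) + s) ^ 2)) ^ j
      = (2 ^ j / (Real.exp (β * T) - 1)) *
          (1 - Real.exp (-(β * T)) *
            ∑ i ∈ Finset.range (j + 1), (β * T) ^ i / (Nat.factorial i : ℝ)) := by
  set a := β * T with ha_def
  have ha : 0 < a := mul_pos hβ hT
  set E := Real.exp a with hE_def
  have hE1 : 1 < E := Real.one_lt_exp_iff.mpr ha
  have hE0 : 0 < E := lt_trans one_pos hE1
  set K := E - 1 with hK_def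
  have hK : 0 < K := sub_pos.mpr hE1
  set S : ℝ → ℝ := fun c => ∑ i ∈ Finset.range (j+1), c ^ i / (Nat.factorial i : ℝ)
    with hS_def
  set G : ℝ → ℝ := fun c => -((Nat.factorial j : ℝ) * (Real.exp (-c) * S c)) with hG_def
  set H : ℝ → ℝ := fun s => (E / K) * G (a - Real.log (E - s * K)) with hH_def
  have hjfac : (Nat.factorial j : ℝ) ≠ 0 := Nat.cast_ne_zero.mpr (Nat.factorial_ne_zero j)
  -- positivity of u = E - s*K on [0,1]
  have hu : ∀ s ∈ Set.uIcc (0:ℝ) 1, 0 < E - s * K := by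
    intro s hs
    rw [Set.uIcc_of_le (zero_le_one)] at hs
    have h1 : s * K ≤ K := by
      nlinarith [hs.1, hs.2, hK]
    have : E - K = 1 := by rw [hK_def]; ring
    nlinarith
  -- derivative of G
  have hG : ∀ c : ℝ, HasDerivAt G (c ^ j * Real.exp (-c)) c := by
    intro c
    have h1 : HasDerivAt (fun c : ℝ => Real.exp (-c)) (-Real.exp (-c)) c := by
      simpa using (hasDerivAt_neg c).exp
    have h2 := yule_sum_hasDerivAt j c
    have h3 := ((h1.mul h2).const_mul (Nat.factorial j : ℝ)).neg
    have h4 : HasDerivAt G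
        (-((Nat.factorial j : ℝ) *
          (-Real.exp (-c) * S c + Real.exp (-c) * ∑ i ∈ Finset.range j, c ^ i / (Nat.factorial i : ℝ)))) c := h3
    convert h4 using 1
    have hs : S c = (∑ i ∈ Finset.range j, c ^ i / (Nat.factorial i : ℝ)) + c ^ j / (Nat.factorial j : ℝ) := by
      rw [hS_def]; exact Finset.sum_range_succ _ j
    rw [hs]
    field_simp
    ring
  -- derivative of H
  have hH : ∀ s ∈ Set.uIcc (0:ℝ) 1, HasDerivAt H ((a - Real.log (E - s * K)) ^ j) s := by
    intro s hs
    have hus := hu s hs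
    have h1 : HasDerivAt (fun s : ℝ => E - s * K) (-K) s := by
      simpa using ((hasDerivAt_id s).mul_const K).const_sub E
    have h2 : HasDerivAt (fun s : ℝ => a - Real.log (E - s * K)) (K / (E - s * K)) s := by
      have := ((Real.hasDerivAt_log hus.ne').comp s h1).const_sub a
      refine this.congr_deriv ?_
      field_simp
    have h3 := ((hG (a - Real.log (E - s * K))).comp s h2).const_mul (E / K)
    refine h3.congr_deriv ?_
    have hexp : Real.exp (-(a - Real.log (E - s * K))) = (E - s * K) / E := by
      rw [neg_sub, Real.exp_sub, Real.exp_log hus, hE_def]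
    rw [hexp]
    have hne : E - K * s ≠ 0 := by rw [mul_comm]; exact hus.ne'
    field_simp
  -- integrability of the derivative
  have hcont : ContinuousOn (fun s : ℝ => (a - Real.log (E - s * K)) ^ j) (Set.uIcc 0 1) := by
    apply ContinuousOn.pow
    apply ContinuousOn.sub continuousOn_const
    apply ContinuousOn.log
    · exact (continuous_const.sub (continuous_id.mul continuous_const)).continuousOn
    · intro s hs; exact (hu s hs).ne'
  have hint := intervalIntegral.integral_eq_sub_of_hasDerivAt hH
    (hcont.intervalIntegrable)
  -- rewrite integrand
  have hcongr : (∫ s in (0:ℝ)..1, (a + Real.log (E / ((1 - s) * E + s) ^ 2)) ^ j)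
      = ∫ s in (0:ℝ)..1, (2:ℝ) ^ j * (a - Real.log (E - s * K)) ^ j := by
    apply intervalIntegral.integral_congr
    intro s hs
    have hus := hu s hs
    show (a + Real.log (E / ((1 - s) * E + s) ^ 2)) ^ j = 2 ^ j * (a - Real.log (E - s * K)) ^ j
    have h1 : (1 - s) * E + s = E - s * K := by rw [hK_def]; ring
    rw [h1, Real.log_div hE0.ne' (pow_ne_zero 2 hus.ne'), Real.log_pow, hE_def, Real.log_exp]
    rw [show a + (a - (2:ℕ) * Real.log (Real.exp a - s * K)) = 2 * (a - Real.log (Real.exp a - s * K)) by push_cast; ring]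
    rw [mul_pow]
  rw [hcongr, intervalIntegral.integral_const_mul, hint]
  -- evaluate H 1 and H 0
  have hS0 : S 0 = 1 := by
    rw [hS_def]
    simp [Finset.sum_range_succ']
  have hH1 : H 1 = (E / K) * (-((Nat.factorial j : ℝ) * (Real.exp (-a) * S a))) := by
    rw [hH_def]
    simp only []
    rw [show E - 1 * K = 1 by rw [hK_def]; ring, Real.log_one, sub_zero, hG_def]
  have hH0 : H 0 = (E / K) * (-(Nat.factorial j : ℝ)) := by
    rw [hH_def]
    simp only []
    rw [show E - 0 * K = E by ring, hE_def, Real.log_exp, sub_self, hG_def]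
    simp [hS0]
  rw [hH1, hH0]
  have hEinv : Real.exp (-a) = E⁻¹ := by rw [Real.exp_neg, hE_def]
  rw [hEinv]
  field_simp
  ring
end

section
/- Let β > 0, T > 0 and j a natural number. Then (1+βT) · (e^{−2βT}/j!) · ∫₀¹ ( 2βT − 2·log(1 + βT(1−s)) )^j ds = 2^j · e^{−βT} · ((βT+1)/(βT)) · Σ_{i=0}^{j} (1/i!) · ( (1+βT)·e^{−βT} · ( log( e^{βT}/(1+βT) ) )^i − (βT)^i · e^{−βT} ). -/
open Real MeasureTheory intervalIntegral


private lemma tele (w : ℝ) (j : ℕ) : ∑ i ∈ Finset.range (j+1),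
    (2:ℝ)^(j-i) * ((Nat.factorial j : ℝ)/(Nat.factorial i)) * (w^i - 2*i*w^(i-1)) = w^j := by
  induction j with
  | zero => simp
  | succ j ih =>
    rw [Finset.sum_range_succ]
    have h1 : ∀ i ∈ Finset.range (j+1),
        (2:ℝ)^(j+1-i) * ((Nat.factorial (j+1) : ℝ)/(Nat.factorial i)) * (w^i - 2*i*w^(i-1))
        = (2*((j:ℝ)+1)) * ((2:ℝ)^(j-i) * ((Nat.factorial j : ℝ)/(Nat.factorial i)) * (w^i - 2*i*w^(i-1))) := by
      intro i hi
      have hij : i ≤ j := Nat.lt_succ_iff.mp (Finset.mem_range.mp hi)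
      rw [Nat.succ_sub hij, pow_succ, Nat.factorial_succ]
      push_cast
      ring
    rw [Finset.sum_congr rfl h1, ← Finset.mul_sum, ih]
    have hf : (Nat.factorial (j+1) : ℝ) ≠ 0 := Nat.cast_ne_zero.mpr (Nat.factorial_ne_zero _)
    simp only [Nat.sub_self, pow_zero, Nat.add_sub_cancel, div_self hf]
    push_cast
    ring

private lemma hasDeriv_G (a : ℝ) (j : ℕ) {v : ℝ} (hv : 0 < v) :
    HasDerivAt (fun v => ∑ i ∈ Finset.range (j+1),
      (2:ℝ)^(j-i) * ((Nat.factorial j : ℝ)/(Nat.factorial i)) * (v * (2*a - 2*Real.log v)^i))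
      ((2*a - 2*Real.log v)^j) v := by
  have hw : HasDerivAt (fun v => 2*a - 2*Real.log v) (-(2/v)) v := by
    have h := ((Real.hasDerivAt_log hv.ne').const_mul 2).const_sub (2*a)
    simpa [div_eq_mul_inv] using h
  have key : ∀ i ∈ Finset.range (j+1), HasDerivAt
      (fun v => (2:ℝ)^(j-i) * ((Nat.factorial j : ℝ)/(Nat.factorial i)) * (v * (2*a - 2*Real.log v)^i))
      ((2:ℝ)^(j-i) * ((Nat.factorial j : ℝ)/(Nat.factorial i)) *
        ((2*a-2*Real.log v)^i - 2*i*(2*a-2*Real.log v)^(i-1))) v := by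
    intro i _
    have h1 := (hasDerivAt_id v).mul (hw.pow i)
    have h2 := h1.const_mul ((2:ℝ)^(j-i) * ((Nat.factorial j : ℝ)/(Nat.factorial i)))
    refine h2.congr_deriv ?_
    have : v ≠ 0 := hv.ne'
    field_simp
    simp only [Pi.pow_apply, id_eq]
    ring
  have h := HasDerivAt.fun_sum key
  rwa [tele] at h


private lemma sum_eval (j : ℕ) (x c : ℝ) :
    ∑ i ∈ Finset.range (j+1),
      (2:ℝ)^(j-i) * ((Nat.factorial j : ℝ)/(Nat.factorial i)) * (c * (2*x)^i)
    = 2^j * (Nat.factorial j : ℝ) * c * ∑ i ∈ Finset.range (j+1), x^i/(Nat.factorial i) := by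
  rw [Finset.mul_sum]
  apply Finset.sum_congr rfl
  intro i hi
  have hij : i ≤ j := Nat.lt_succ_iff.mp (Finset.mem_range.mp hi)
  have h2 : (2:ℝ)^(j-i) = 2^j / 2^i := pow_sub₀ (2:ℝ) two_ne_zero hij
  have hf : (Nat.factorial i : ℝ) ≠ 0 := Nat.cast_ne_zero.mpr (Nat.factorial_ne_zero _)
  have hp : ((2:ℝ)^i) ≠ 0 := pow_ne_zero _ two_ne_zero
  rw [h2, mul_pow]
  field_simp

private lemma main_aux (a : ℝ) (ha : 0 < a) (j : ℕ) :
    ∫ s in (0:ℝ)..1, (2 * a - 2 * Real.log (1 + a * (1 - s))) ^ j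
      = (2:ℝ)^j * (Nat.factorial j : ℝ) / a *
        ((1+a) * ∑ i ∈ Finset.range (j+1), (a - Real.log (1+a))^i / (Nat.factorial i)
         - ∑ i ∈ Finset.range (j+1), a^i / (Nat.factorial i)) := by
  have hderiv : ∀ s ∈ Set.uIcc (0:ℝ) 1, HasDerivAt
      (fun s => -(1/a) * ∑ i ∈ Finset.range (j+1),
        (2:ℝ)^(j-i) * ((Nat.factorial j : ℝ)/(Nat.factorial i)) *
          ((1 + a*(1-s)) * (2*a - 2*Real.log (1 + a*(1-s)))^i))
      ((2*a - 2*Real.log (1 + a*(1-s)))^j) s := by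
    intro s hs
    rw [Set.uIcc_of_le zero_le_one] at hs
    have hvpos : 0 < 1 + a * (1 - s) := by nlinarith [hs.1, hs.2]
    have hinner : HasDerivAt (fun s : ℝ => 1 + a * (1 - s)) (-a) s := by
      have h := (((hasDerivAt_const s (1:ℝ)).sub (hasDerivAt_id s)).const_mul a).const_add 1
      simpa using h
    have hcomp := (hasDeriv_G a j hvpos).comp s hinner
    have h2 := hcomp.const_mul (-(1/a))
    simp only [Function.comp] at h2
    refine h2.congr_deriv ?_
    field_simp
  have hint : IntervalIntegrable (fun s => (2*a - 2*Real.log (1 + a*(1-s)))^j) volume 0 1 := by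
    apply ContinuousOn.intervalIntegrable
    apply ContinuousOn.pow
    apply ContinuousOn.sub continuousOn_const
    apply ContinuousOn.mul continuousOn_const
    apply ContinuousOn.log
    · fun_prop
    · intro s hs
      rw [Set.uIcc_of_le zero_le_one] at hs
      nlinarith [hs.1, hs.2]
  rw [intervalIntegral.integral_eq_sub_of_hasDerivAt hderiv hint]
  have e1 : ∑ i ∈ Finset.range (j+1),
      (2:ℝ)^(j-i) * ((Nat.factorial j : ℝ)/(Nat.factorial i)) *
        ((1 + a*(1-(1:ℝ))) * (2*a - 2*Real.log (1 + a*(1-(1:ℝ))))^i)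
      = 2^j * (Nat.factorial j : ℝ) * 1 * ∑ i ∈ Finset.range (j+1), a^i/(Nat.factorial i) := by
    rw [← sum_eval j a 1]
    norm_num
  have e2 : ∑ i ∈ Finset.range (j+1),
      (2:ℝ)^(j-i) * ((Nat.factorial j : ℝ)/(Nat.factorial i)) *
        ((1 + a*(1-(0:ℝ))) * (2*a - 2*Real.log (1 + a*(1-(0:ℝ))))^i)
      = 2^j * (Nat.factorial j : ℝ) * (1+a) *
          ∑ i ∈ Finset.range (j+1), (a - Real.log (1+a))^i/(Nat.factorial i) := by
    rw [← sum_eval j (a - Real.log (1+a)) (1+a)]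
    apply Finset.sum_congr rfl
    intro i _
    have h : 1 + a*(1-(0:ℝ)) = 1 + a := by ring
    rw [h, show 2*a - 2*Real.log (1+a) = 2*(a - Real.log (1+a)) from by ring]
  show -(1/a) * _ - -(1/a) * _ = _
  rw [e1, e2]
  field_simp
  ring

/-- Equation (cc): the conditional distribution of the number of ancestral reproduction
events for a critical birth-death process with birth and death rate `β`. -/
theorem critical_birth_death_event_count
    (β T : ℝ) (hβ : 0 < β) (hT : 0 < T) (j : ℕ) :
    (1 + β * T) * (Real.exp (-(2 * β * T)) / (Nat.factorial j : ℝ)) *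
        ∫ s in (0 : ℝ)..1,
          (2 * β * T - 2 * Real.log (1 + β * T * (1 - s))) ^ j
      = 2 ^ j * Real.exp (-(β * T)) * ((β * T + 1) / (β * T)) *
          ∑ i ∈ Finset.range (j + 1),
            (1 / (Nat.factorial i : ℝ)) *
              ((1 + β * T) * Real.exp (-(β * T)) *
                  (Real.log (Real.exp (β * T) / (1 + β * T))) ^ i -
                (β * T) ^ i * Real.exp (-(β * T))) := by
  have ha : 0 < β * T := mul_pos hβ hT
  have h1a : (0:ℝ) < 1 + β * T := by linarith
  rw [show (2:ℝ) * β * T = 2 * (β * T) from by ring]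
  rw [main_aux (β * T) ha j]
  rw [Real.log_div (Real.exp_ne_zero _) h1a.ne', Real.log_exp]
  have hsum : ∑ i ∈ Finset.range (j + 1),
      (1 / (Nat.factorial i : ℝ)) *
        ((1 + β * T) * Real.exp (-(β * T)) * (β * T - Real.log (1 + β * T)) ^ i -
          (β * T) ^ i * Real.exp (-(β * T)))
      = (1 + β * T) * Real.exp (-(β * T)) *
          (∑ i ∈ Finset.range (j+1), (β * T - Real.log (1 + β * T))^i / (Nat.factorial i))
        - Real.exp (-(β * T)) *
          (∑ i ∈ Finset.range (j+1), (β * T)^i / (Nat.factorial i)) := by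
    rw [Finset.mul_sum, Finset.mul_sum, ← Finset.sum_sub_distrib]
    apply Finset.sum_congr rfl
    intro i _
    have hf : (Nat.factorial i : ℝ) ≠ 0 := Nat.cast_ne_zero.mpr (Nat.factorial_ne_zero _)
    field_simp
  rw [hsum]
  have hexp : Real.exp (-(2 * (β * T))) = Real.exp (-(β * T)) * Real.exp (-(β * T)) := by
    rw [← Real.exp_add]; ring_nf
  rw [hexp]
  have hjf : (Nat.factorial j : ℝ) ≠ 0 := Nat.cast_ne_zero.mpr (Nat.factorial_ne_zero _)
  field_simp
  ring
end

section
/- Let T > 0 and j a natural number. Then the improper integral (e^{−T}/j!) · ∫₀¹ ( T + log( e^{−T}·(1−s)^{e^{−T}−1} ) )^j ds converges and equals e^{−T}·(1 − e^{−T})^j. -/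
open Real MeasureTheory intervalIntegral
open Set

lemma exp_neg_image : (fun x : ℝ => Real.exp (-x)) '' Set.Ioi 0 = Set.Ioo 0 1 := by
  ext u
  constructor
  · rintro ⟨x, hx, rfl⟩
    simp only [Set.mem_Ioi] at hx
    exact ⟨Real.exp_pos _, Real.exp_lt_one_iff.mpr (by linarith)⟩
  · rintro ⟨h0, h1⟩
    exact ⟨-Real.log u, by simpa using Real.log_neg h0 h1, by simp [Real.exp_log h0]⟩

lemma neg_log_pow_integrable (n : ℕ) :
    IntegrableOn (fun u : ℝ => (-Real.log u) ^ n) (Set.Ioo 0 1) volume := by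
  have hderiv : ∀ x ∈ Set.Ioi (0:ℝ), HasDerivWithinAt (fun x : ℝ => Real.exp (-x))
      (-Real.exp (-x)) (Set.Ioi 0) x := by
    intro x _
    have h := ((hasDerivAt_neg x).exp).hasDerivWithinAt (s := Set.Ioi (0:ℝ))
    rw [mul_neg_one] at h
    exact h
  have hinj : Set.InjOn (fun x : ℝ => Real.exp (-x)) (Set.Ioi 0) := by
    intro a _ b _ h
    have := Real.exp_injective h
    linarith [neg_injective this]
  rw [← exp_neg_image,
    integrableOn_image_iff_integrableOn_abs_deriv_smul measurableSet_Ioi hderiv hinj]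
  have : IntegrableOn (fun x : ℝ => Real.exp (-x) * x ^ ((n:ℝ)+1-1)) (Set.Ioi 0) volume :=
    Real.GammaIntegral_convergent (by positivity)
  refine this.congr_fun (fun x hx => ?_) measurableSet_Ioi
  have hx0 : (0:ℝ) < x := hx
  simp [abs_of_nonneg (Real.exp_pos (-x)).le, Real.log_exp, smul_eq_mul,
    Real.rpow_natCast, add_sub_cancel_right]

lemma neg_log_pow_integral (n : ℕ) :
    ∫ u in Set.Ioo (0:ℝ) 1, (-Real.log u) ^ n = n.factorial := by
  have hderiv : ∀ x ∈ Set.Ioi (0:ℝ), HasDerivWithinAt (fun x : ℝ => Real.exp (-x))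
      (-Real.exp (-x)) (Set.Ioi 0) x := by
    intro x _
    have h := ((hasDerivAt_neg x).exp).hasDerivWithinAt (s := Set.Ioi (0:ℝ))
    rw [mul_neg_one] at h
    exact h
  have hinj : Set.InjOn (fun x : ℝ => Real.exp (-x)) (Set.Ioi 0) := by
    intro a _ b _ h
    have := Real.exp_injective h
    linarith [neg_injective this]
  rw [← exp_neg_image,
    integral_image_eq_integral_abs_deriv_smul measurableSet_Ioi hderiv hinj]
  have := Real.Gamma_eq_integral (s := (n:ℝ)+1) (by positivity)
  rw [Real.Gamma_nat_eq_factorial] at this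
  rw [this]
  refine setIntegral_congr_fun measurableSet_Ioi fun x hx => ?_
  have hx0 : (0:ℝ) < x := hx
  simp [abs_of_nonneg (Real.exp_pos (-x)).le, Real.log_exp, smul_eq_mul,
    Real.rpow_natCast, add_sub_cancel_right]

lemma neg_log_sub_intervalIntegrable (n : ℕ) :
    IntervalIntegrable (fun s : ℝ => (-Real.log (1 - s)) ^ n) volume 0 1 := by
  have h : IntervalIntegrable (fun u : ℝ => (-Real.log u) ^ n) volume 0 1 := by
    rw [intervalIntegrable_iff_integrableOn_Ioo_of_le zero_le_one]
    exact neg_log_pow_integrable n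
  simpa using (h.comp_sub_left 1).symm

lemma neg_log_sub_integral (n : ℕ) :
    ∫ s in (0:ℝ)..1, (-Real.log (1 - s)) ^ n = n.factorial := by
  have h := intervalIntegral.integral_comp_sub_left
    (a := (0:ℝ)) (b := 1) (fun u : ℝ => (-Real.log u) ^ n) 1
  simp only [sub_zero, sub_self] at h
  rw [h, intervalIntegral.integral_of_le zero_le_one,
    MeasureTheory.integral_Ioc_eq_integral_Ioo, neg_log_pow_integral]


/-- Section 3.4: for the heavy-tailed process the number of ancestral reproduction
events is geometric: `(e^{-T}/j!) ∫₀¹ (T + log(e^{-T}(1-s)^{e^{-T}-1}))^j ds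
  = e^{-T}(1-e^{-T})^j`, the integral being convergent. -/
theorem heavy_tailed_event_count
    (T : ℝ) (hT : 0 < T) (j : ℕ) :
    IntervalIntegrable
        (fun s : ℝ =>
          (T + Real.log (Real.exp (-T) * (1 - s) ^ (Real.exp (-T) - 1))) ^ j)
        MeasureTheory.volume 0 1 ∧
      (Real.exp (-T) / (Nat.factorial j : ℝ)) *
          ∫ s in (0 : ℝ)..1,
            (T + Real.log (Real.exp (-T) * (1 - s) ^ (Real.exp (-T) - 1))) ^ j
        = Real.exp (-T) * (1 - Real.exp (-T)) ^ j := by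
  set a := Real.exp (-T) with ha
  have ha0 : 0 < a := Real.exp_pos _
  have key : ∀ s ∈ Set.Ioo (0:ℝ) 1,
      (T + Real.log (a * (1 - s) ^ (a - 1))) ^ j
        = (1 - a) ^ j * (-Real.log (1 - s)) ^ j := by
    intro s hs
    have h1s : 0 < 1 - s := by linarith [hs.2]
    rw [Real.log_mul (ne_of_gt ha0) (by positivity), Real.log_rpow h1s]
    have hla : Real.log a = -T := by simp [ha]
    rw [hla, show T + (-T + (a - 1) * Real.log (1 - s))
        = (1 - a) * (-Real.log (1 - s)) by ring, mul_pow]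
  have hgInt : IntegrableOn (fun s : ℝ => (-Real.log (1 - s)) ^ j)
      (Set.Ioo 0 1) volume := by
    have := neg_log_sub_intervalIntegrable j
    rwa [intervalIntegrable_iff_integrableOn_Ioo_of_le zero_le_one] at this
  have hInt : IntervalIntegrable
      (fun s : ℝ => (T + Real.log (a * (1 - s) ^ (a - 1))) ^ j) volume 0 1 := by
    rw [intervalIntegrable_iff_integrableOn_Ioo_of_le zero_le_one]
    exact (MeasureTheory.IntegrableOn.congr_fun (hgInt.const_mul ((1 - a) ^ j))
      (fun s hs => (key s hs).symm) measurableSet_Ioo)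
  refine ⟨hInt, ?_⟩
  have hI : ∫ s in (0:ℝ)..1, (T + Real.log (a * (1 - s) ^ (a - 1))) ^ j
      = (1 - a) ^ j * (j.factorial : ℝ) := by
    rw [intervalIntegral.integral_of_le zero_le_one,
      MeasureTheory.integral_Ioc_eq_integral_Ioo,
      setIntegral_congr_fun measurableSet_Ioo key,
      MeasureTheory.integral_const_mul]
    congr 1
    rw [← MeasureTheory.integral_Ioc_eq_integral_Ioo,
      ← intervalIntegral.integral_of_le zero_le_one, neg_log_sub_integral]
  rw [hI]
  have hfac : (j.factorial : ℝ) ≠ 0 := Nat.cast_ne_zero.mpr j.factorial_ne_zero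
  field_simp
end

section
/- Let β > 0. Then lim_{T→∞} [ 2βT − (1+βT) · ∫₀¹ ( 2βT − 2·log(1 + βT(1−s)) ) · (1 + βT(1−s))^{−2} ds ] = 2. -/
open Real MeasureTheory intervalIntegral Filter

lemma gap_integral_eval (c : ℝ) (hc : 0 < c) :
    ∫ s in (0 : ℝ)..1,
        (2 * c - 2 * Real.log (1 + c * (1 - s))) * ((1 + c * (1 - s)) ^ 2)⁻¹
      = (2 * c - 2 - 2 * Real.log (1 + c * (1 - 1))) / (c * (1 + c * (1 - 1)))
        - (2 * c - 2 - 2 * Real.log (1 + c * (1 - 0))) / (c * (1 + c * (1 - 0))) := by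
  have hvpos : ∀ s ∈ Set.uIcc (0 : ℝ) 1, 0 < 1 + c * (1 - s) := by
    intro s hs
    rw [Set.uIcc_of_le (by norm_num)] at hs
    have : 0 ≤ 1 - s := by linarith [hs.2]
    nlinarith
  exact intervalIntegral.integral_eq_sub_of_hasDerivAt
    (f := fun s => (2 * c - 2 - 2 * Real.log (1 + c * (1 - s))) / (c * (1 + c * (1 - s))))
    (by
      intro s hs
      have hv : 0 < 1 + c * (1 - s) := hvpos s hs
      have hvne : (1 + c * (1 - s)) ≠ 0 := ne_of_gt hv
      have hV : HasDerivAt (fun s : ℝ => 1 + c * (1 - s)) (-c) s := by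
        have : HasDerivAt (fun s : ℝ => 1 - s) (-1) s := by
          simpa [Pi.sub_def] using (hasDerivAt_const s (1 : ℝ)).sub (hasDerivAt_id s)
        simpa using ((this.const_mul c).const_add 1)
      have hL : HasDerivAt (fun s : ℝ => Real.log (1 + c * (1 - s)))
          (-c / (1 + c * (1 - s))) s := hV.log hvne
      have hnum : HasDerivAt (fun s : ℝ => 2 * c - 2 - 2 * Real.log (1 + c * (1 - s)))
          (-(2 * (-c / (1 + c * (1 - s))))) s := by
        simpa [Pi.sub_def] using (hasDerivAt_const s (2 * c - 2)).sub (hL.const_mul 2)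
      have hden : HasDerivAt (fun s : ℝ => c * (1 + c * (1 - s))) (c * (-c)) s :=
        hV.const_mul c
      have hdne : c * (1 + c * (1 - s)) ≠ 0 := by positivity
      have h : HasDerivAt
          (fun y : ℝ => (2 * c - 2 - 2 * Real.log (1 + c * (1 - y))) / (c * (1 + c * (1 - y))))
          _ s := hnum.div hden hdne
      refine h.congr_deriv ?_
      set L := Real.log (1 + c * (1 - s))
      field_simp
      ring)
    (by
      apply ContinuousOn.intervalIntegrable
      apply ContinuousOn.mul
      · apply ContinuousOn.sub continuousOn_const
        have hlog : ContinuousOn (fun s : ℝ => Real.log (1 + c * (1 - s)))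
            (Set.uIcc (0 : ℝ) 1) :=
          Real.continuousOn_log.comp (by fun_prop)
            (fun s hs => ne_of_gt (hvpos s hs))
        exact hlog.const_smul (2 : ℝ) |>.congr (fun x hx => by simp [smul_eq_mul])
      · exact ContinuousOn.inv₀ (by fun_prop)
          (fun s hs => pow_ne_zero 2 (ne_of_gt (hvpos s hs))))

lemma log_one_add_div_tendsto_zero :
    Tendsto (fun x : ℝ => Real.log (1 + x) / x) atTop (nhds 0) := by
  have h1 : Tendsto (fun x : ℝ => Real.log (1 + x) / (1 + x)) atTop (nhds 0) := by
    have hlog : Tendsto (fun x : ℝ => Real.log x / x) atTop (nhds 0) :=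
      Real.isLittleO_log_id_atTop.tendsto_div_nhds_zero
    exact hlog.comp (tendsto_atTop_add_const_left atTop 1 tendsto_id)
  have h2 : Tendsto (fun x : ℝ => x⁻¹ + 1) atTop (nhds (0 + 1)) :=
    tendsto_inv_atTop_zero.add tendsto_const_nhds
  have h := h1.mul h2
  rw [zero_mul] at h
  refine h.congr' ?_
  filter_upwards [eventually_gt_atTop 0] with x hx
  have h1x : (1 : ℝ) + x ≠ 0 := by positivity
  field_simp

/-- Lemma 3.2 in the critical birth-death case: `Gap_T → 2` as `T → ∞`, where
`Gap_T = 2βT - (1+βT) ∫₀¹ (2βT - 2 log(1+βT(1-s))) (1+βT(1-s))⁻² ds`. -/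
theorem critical_gap_tendsto_two (β : ℝ) (hβ : 0 < β) :
    Tendsto
      (fun T : ℝ =>
        2 * β * T - (1 + β * T) *
          ∫ s in (0 : ℝ)..1,
            (2 * β * T - 2 * Real.log (1 + β * T * (1 - s))) *
              ((1 + β * T * (1 - s)) ^ 2)⁻¹)
      atTop (nhds 2) := by
  have hlim : Tendsto (fun T : ℝ => 2 - 2 * (Real.log (1 + β * T) / (β * T)))
      atTop (nhds 2) := by
    have hβT : Tendsto (fun T : ℝ => β * T) atTop atTop :=
      tendsto_id.const_mul_atTop hβ
    have h0 : Tendsto (fun T : ℝ => Real.log (1 + β * T) / (β * T)) atTop (nhds 0) :=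
      log_one_add_div_tendsto_zero.comp hβT
    have := tendsto_const_nhds (α := ℝ) (x := (2 : ℝ)) (f := atTop) |>.sub (h0.const_mul 2)
    simpa using this
  refine hlim.congr' ?_
  filter_upwards [eventually_gt_atTop 0] with T hT
  have hc : 0 < β * T := mul_pos hβ hT
  have hI := gap_integral_eval (β * T) hc
  have hcne : β * T ≠ 0 := ne_of_gt hc
  have h1c : (1 : ℝ) + β * T ≠ 0 := by positivity
  simp only [mul_assoc] at hI ⊢
  rw [hI]
  norm_num
  set L := Real.log (1 + β * T)
  field_simp
  ring
end

section
/- For every real t ≥ 0, the improper integral −∫₀¹ e^{−t}·(1−s)^{e^{−t}−1}·log(1−s) ds converges and equals e^{t}. -/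
open Real MeasureTheory intervalIntegral Set Filter

-- auxiliary: integrability
lemma aux_intble (a : ℝ) (ha : 0 < a) :
    IntervalIntegrable
      (fun s : ℝ => a * (1 - s) ^ (a - 1) * Real.log (1 - s))
      MeasureTheory.volume 0 1 := by
  have hg : IntervalIntegrable (fun s : ℝ => 2 * (1 - s) ^ (a / 2 - 1))
      MeasureTheory.volume 0 1 := by
    have h0 : IntervalIntegrable (fun x : ℝ => x ^ (a / 2 - 1))
        MeasureTheory.volume 0 1 := intervalIntegrable_rpow' (by linarith)
    have := (h0.comp_sub_left 1).symm
    simpa using this.const_mul 2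
  refine hg.mono_fun' ?_ ?_
  · apply Measurable.aestronglyMeasurable
    have h1 : Measurable fun s : ℝ => 1 - s := measurable_const.sub measurable_id
    measurability
  · rw [Filter.EventuallyLE, ae_restrict_iff' measurableSet_uIoc]
    refine Eventually.of_forall fun s hs => ?_
    rw [Set.uIoc_of_le (by norm_num : (0:ℝ) ≤ 1)] at hs
    rcases eq_or_lt_of_le hs.2 with h1 | h1
    · -- s = 1
      subst h1
      simp only [sub_self, Real.log_zero, mul_zero, norm_zero]
      have := Real.rpow_nonneg (le_refl (0:ℝ)) (a / 2 - 1)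
      linarith
    · have hu : 0 < 1 - s := by linarith
      have hu1 : 1 - s ≤ 1 := by linarith [hs.1]
      have hlog : -Real.log (1 - s) ≤ (2 / a) * (1 - s) ^ (-(a / 2)) := by
        have hp := Real.rpow_pos_of_pos hu (-(a / 2))
        have h2 := Real.log_le_sub_one_of_pos hp
        rw [Real.log_rpow hu] at h2
        rw [div_mul_eq_mul_div, le_div_iff₀ ha]
        nlinarith
      have hlogneg : Real.log (1 - s) ≤ 0 := Real.log_nonpos (by linarith) hu1
      have hnorm : ‖a * (1 - s) ^ (a - 1) * Real.log (1 - s)‖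
          = a * (1 - s) ^ (a - 1) * (-Real.log (1 - s)) := by
        rw [Real.norm_eq_abs, abs_mul, abs_mul, abs_of_pos ha,
          abs_of_pos (Real.rpow_pos_of_pos hu _), abs_of_nonpos hlogneg]
      rw [hnorm]
      have hp := Real.rpow_pos_of_pos hu (a - 1)
      calc a * (1 - s) ^ (a - 1) * (-Real.log (1 - s))
          ≤ a * (1 - s) ^ (a - 1) * ((2 / a) * (1 - s) ^ (-(a / 2))) := by
            apply mul_le_mul_of_nonneg_left hlog
            positivity
        _ = 2 * ((1 - s) ^ (a - 1) * (1 - s) ^ (-(a / 2))) := by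
            field_simp
        _ = 2 * (1 - s) ^ (a / 2 - 1) := by
            rw [← Real.rpow_add hu]; ring_nf

/-- Section 4.1: the ancestral reproduction rate of the heavy-tailed process,
`-∫₀¹ e^{-t}(1-s)^{e^{-t}-1} log(1-s) ds = e^t`, the integral being convergent. -/
theorem heavy_tailed_ancestral_rate (t : ℝ) (ht : 0 ≤ t) :
    IntervalIntegrable
        (fun s : ℝ =>
          Real.exp (-t) * (1 - s) ^ (Real.exp (-t) - 1) * Real.log (1 - s))
        MeasureTheory.volume 0 1 ∧
      -∫ s in (0 : ℝ)..1,
          Real.exp (-t) * (1 - s) ^ (Real.exp (-t) - 1) * Real.log (1 - s)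
        = Real.exp t := by
  set a := Real.exp (-t) with ha_def
  have ha : 0 < a := Real.exp_pos _
  have hint := aux_intble a ha
  refine ⟨hint, ?_⟩
  set H : ℝ → ℝ := fun s => -((1 - s) ^ a * Real.log (1 - s)) + (1 - s) ^ a * a⁻¹
    with hH
  have hderiv : ∀ s : ℝ, s < 1 →
      HasDerivAt H (a * (1 - s) ^ (a - 1) * Real.log (1 - s)) s := by
    intro s hs
    have hu : (0:ℝ) < 1 - s := by linarith
    have h1 : HasDerivAt (fun s : ℝ => 1 - s) (-1) s := by
      simpa using (hasDerivAt_id s).const_sub 1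
    have h2 : HasDerivAt (fun s : ℝ => (1 - s) ^ a) (a * (1 - s) ^ (a - 1) * (-1)) s :=
      (Real.hasDerivAt_rpow_const (Or.inl hu.ne')).comp s h1
    have h3 : HasDerivAt (fun s : ℝ => Real.log (1 - s)) ((1 - s)⁻¹ * (-1)) s :=
      (Real.hasDerivAt_log hu.ne').comp s h1
    have h4 := ((h2.mul h3).neg.add (h2.mul_const a⁻¹))
    convert h4 using 1
    · rfl
    · rfl
    · rfl
    have hs1 : (1 - s) ^ a * (1 - s)⁻¹ = (1 - s) ^ (a - 1) := by
      rw [Real.rpow_sub_one hu.ne', div_eq_mul_inv]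
    have e1 : -(a * (1 - s) ^ (a - 1) * -1 * Real.log (1 - s)
          + (1 - s) ^ a * ((1 - s)⁻¹ * -1)) + a * (1 - s) ^ (a - 1) * -1 * a⁻¹
        = a * (1 - s) ^ (a - 1) * Real.log (1 - s)
          + (1 - s) ^ a * (1 - s)⁻¹ - (a * a⁻¹) * ((1 - s) ^ (a - 1)) := by ring
    rw [e1, hs1, mul_inv_cancel₀ ha.ne', one_mul]
    ring
  have hlim0 : Tendsto H (nhdsWithin 0 (Set.Ioi 0)) (nhds a⁻¹) := by
    have hc : ContinuousAt H 0 := (hderiv 0 (by norm_num)).continuousAt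
    have : H 0 = a⁻¹ := by simp [hH]
    simpa [this] using hc.continuousWithinAt.tendsto
  have hlim1 : Tendsto H (nhdsWithin 1 (Set.Iio 1)) (nhds 0) := by
    have hsub : Tendsto (fun s : ℝ => 1 - s) (nhdsWithin 1 (Set.Iio 1))
        (nhdsWithin 0 (Set.Ioi 0)) := by
      rw [tendsto_nhdsWithin_iff]
      constructor
      · have hc : Continuous fun s : ℝ => 1 - s := continuous_const.sub continuous_id
        have h2 := hc.tendsto 1
        simp only [sub_self] at h2
        exact h2.mono_left nhdsWithin_le_nhds
      · filter_upwards [self_mem_nhdsWithin] with s hs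
        simp only [Set.mem_Iio] at hs
        simp only [Set.mem_Ioi]; linarith
    have hL : Tendsto (fun u : ℝ => -(u ^ a * Real.log u) + u ^ a * a⁻¹)
        (nhdsWithin 0 (Set.Ioi 0)) (nhds 0) := by
      have t1 : Tendsto (fun u : ℝ => u ^ a * Real.log u)
          (nhdsWithin 0 (Set.Ioi 0)) (nhds 0) := by
        have := tendsto_log_mul_rpow_nhdsGT_zero ha
        simpa [mul_comm] using this
      have t2 : Tendsto (fun u : ℝ => u ^ a) (nhdsWithin 0 (Set.Ioi 0)) (nhds 0) := by
        have hc : ContinuousAt (fun u : ℝ => u ^ a) 0 :=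
          Real.continuousAt_rpow_const 0 a (Or.inr ha.le)
        have h0 : (0:ℝ) ^ a = 0 := Real.zero_rpow ha.ne'
        simpa [h0] using hc.tendsto.mono_left nhdsWithin_le_nhds
      have := (t1.neg.add (t2.mul_const a⁻¹))
      simpa using this
    exact hL.comp hsub
  have key := intervalIntegral.integral_eq_sub_of_hasDerivAt_of_tendsto
    (f := H) (f' := fun s => a * (1 - s) ^ (a - 1) * Real.log (1 - s))
    (by norm_num : (0:ℝ) < 1)
    (fun x hx => hderiv x hx.2) hint hlim0 hlim1
  rw [key]
  rw [← Real.exp_neg]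
  simp [ha_def]
end
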